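/- Let (Z_k)_{k≥0} be a stationary Gaussian sequence with E[Z_0^2] < ∞, λ > 0, q an even positive integer, and R_{P,q}(λ, Z_k) := (Z_k − e^{−λk}Z_0)^q − Z_k^q. Then for every ε > 0, n^{−ε} Σ_{k=0}^{n−1} R_{P,q}(λ, Z_k) → 0 almost surely as n → ∞. -/

import Mathlib

open MeasureTheory ProbabilityTheory Filter

private lemma aux_abs_pow_sub_pow_le (a b : ℝ) (q : ℕ) :
    |a ^ q - b ^ q| ≤ q * (|a| + |b|) ^ (q - 1) * |a - b| := by
  rw [← geom_sum₂_mul, abs_mul]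
  gcongr ?_ * _
  calc |∑ i ∈ Finset.range q, a ^ i * b ^ (q - 1 - i)|
      ≤ ∑ i ∈ Finset.range q, |a ^ i * b ^ (q - 1 - i)| :=
        Finset.abs_sum_le_sum_abs _ _
    _ ≤ ∑ _i ∈ Finset.range q, (|a| + |b|) ^ (q - 1) := by
        refine Finset.sum_le_sum fun i hi => ?_
        rw [abs_mul, abs_pow, abs_pow]
        calc |a| ^ i * |b| ^ (q - 1 - i)
            ≤ (|a| + |b|) ^ i * (|a| + |b|) ^ (q - 1 - i) :=
              mul_le_mul
                (pow_le_pow_left₀ (abs_nonneg _)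
                  (le_add_of_nonneg_right (abs_nonneg _)) i)
                (pow_le_pow_left₀ (abs_nonneg _)
                  (le_add_of_nonneg_left (abs_nonneg _)) _)
                (pow_nonneg (abs_nonneg _) _)
                (pow_nonneg (by positivity) _)
          _ = (|a| + |b|) ^ (q - 1) := by
              rw [← pow_add]
              congr 1
              have := Finset.mem_range.mp hi
              omega
    _ = q * (|a| + |b|) ^ (q - 1) := by
        rw [Finset.sum_const, Finset.card_range, nsmul_eq_mul]

private lemma aux_summable_poly_geom (m : ℕ) (D : ℝ) {r : ℝ} (hr : |r| < 1) :
    Summable (fun k : ℕ => ((k : ℝ) + D) ^ m * r ^ k) := by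
  have h : ∀ k : ℕ, ((k : ℝ) + D) ^ m * r ^ k
      = ∑ j ∈ Finset.range (m + 1),
          ((m.choose j : ℝ) * D ^ (m - j)) * ((k : ℝ) ^ j * r ^ k) := by
    intro k
    rw [add_pow, Finset.sum_mul]
    exact Finset.sum_congr rfl fun j hj => by ring
  simp only [h]
  refine summable_sum fun j hj => ?_
  exact (summable_pow_mul_geometric_of_norm_lt_one (R := ℝ) j
    (by rwa [Real.norm_eq_abs])).mul_left _

theorem as_convergence_power_remainder_sum
    {Ω : Type*} [MeasureSpace Ω] [IsProbabilityMeasure (ℙ : Measure Ω)]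
    (Z : ℕ → Ω → ℝ) (hmeas : ∀ k, Measurable (Z k))
    (hGauss : ∀ (s : Finset ℕ) (c : ℕ → ℝ), ∃ v : NNReal,
      Measure.map (fun ω => ∑ i ∈ s, c i * Z i ω) ℙ = gaussianReal 0 v)
    (hStat : ∀ m : ℕ, Measure.map (fun ω (i : ℕ) => Z (i + m) ω) ℙ
      = Measure.map (fun ω (i : ℕ) => Z i ω) ℙ)
    (hL2 : Integrable (fun ω => (Z 0 ω) ^ 2) ℙ)
    (lam : ℝ) (hlam : 0 < lam) (q : ℕ) (hq : Even q) (hq0 : 0 < q) :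
    ∀ ε : ℝ, 0 < ε → ∀ᵐ ω ∂ℙ,
      Tendsto (fun n : ℕ => (n : ℝ) ^ (-ε) * ∑ k ∈ Finset.range n,
          ((Z k ω - Real.exp (-lam * k) * Z 0 ω) ^ q - (Z k ω) ^ q))
        atTop (nhds 0) := by
  intro ε hε
  -- each Z m has the same law as Z 0
  have hmeasF : ∀ m : ℕ, Measurable (fun ω (i : ℕ) => Z (i + m) ω) :=
    fun m => measurable_pi_lambda _ fun i => hmeas _
  have hlaw : ∀ m : ℕ, Measure.map (Z m) ℙ = Measure.map (Z 0) ℙ := by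
    intro m
    have h0 := congrArg (Measure.map (fun g : ℕ → ℝ => g 0)) (hStat m)
    rw [Measure.map_map (measurable_pi_apply 0) (hmeasF m),
        Measure.map_map (measurable_pi_apply 0)
          (measurable_pi_lambda _ fun i => hmeas i)] at h0
    have e1 : ((fun f : ℕ → ℝ => f 0) ∘ fun ω (i : ℕ) => Z (i + m) ω) = Z m := by
      funext ω; simp
    have e2 : ((fun f : ℕ → ℝ => f 0) ∘ fun ω (i : ℕ) => Z i ω) = Z 0 := by
      funext ω; simp
    rwa [e1, e2] at h0
  -- the common second moment (as a lintegral)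
  set I : ENNReal := ∫⁻ ω, ENNReal.ofReal ((Z 0 ω) ^ 2) ∂ℙ with hIdef
  have hg2 : Measurable (fun x : ℝ => ENNReal.ofReal (x ^ 2)) :=
    (measurable_id.pow_const 2).ennreal_ofReal
  have I2 : ∀ m : ℕ, ∫⁻ ω, ENNReal.ofReal ((Z m ω) ^ 2) ∂ℙ = I := by
    intro m
    rw [hIdef, ← lintegral_map hg2 (hmeas m), hlaw m, lintegral_map hg2 (hmeas 0)]
  have hI : I < ⊤ := by
    have := hL2.hasFiniteIntegral
    rw [HasFiniteIntegral] at this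
    refine lt_of_le_of_lt (le_of_eq (lintegral_congr fun ω => ?_)) this
    rw [← Real.enorm_eq_ofReal (sq_nonneg _)]
  -- Borel–Cantelli
  set s : ℕ → Set Ω := fun k => {ω | (k : ℝ) + 1 < |Z k ω|} with hsdef
  have hμ : ∀ k : ℕ, ℙ (s k) ≤ I * ENNReal.ofReal ((((k : ℝ) + 1) ^ 2)⁻¹) := by
    intro k
    have hk2 : (0 : ℝ) < ((k : ℝ) + 1) ^ 2 := by positivity
    have hsub : s k ⊆ {ω | ENNReal.ofReal (((k : ℝ) + 1) ^ 2)
        ≤ ENNReal.ofReal ((Z k ω) ^ 2)} := by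
      intro ω hω
      have h1 : (k : ℝ) + 1 < |Z k ω| := hω
      have h2 : ((k : ℝ) + 1) ^ 2 ≤ (Z k ω) ^ 2 := by
        rw [← sq_abs (Z k ω)]
        exact pow_le_pow_left₀ (by positivity) h1.le 2
      exact ENNReal.ofReal_le_ofReal h2
    have hmeasf : AEMeasurable (fun ω => ENNReal.ofReal ((Z k ω) ^ 2)) ℙ :=
      (hg2.comp (hmeas k)).aemeasurable
    calc ℙ (s k) ≤ ℙ {ω | ENNReal.ofReal (((k : ℝ) + 1) ^ 2)
          ≤ ENNReal.ofReal ((Z k ω) ^ 2)} := measure_mono hsub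
      _ ≤ (∫⁻ ω, ENNReal.ofReal ((Z k ω) ^ 2) ∂ℙ)
            / ENNReal.ofReal (((k : ℝ) + 1) ^ 2) :=
          meas_ge_le_lintegral_div hmeasf
            (by simpa using (ENNReal.ofReal_pos.mpr hk2).ne')
            ENNReal.ofReal_ne_top
      _ = I * ENNReal.ofReal ((((k : ℝ) + 1) ^ 2)⁻¹) := by
          rw [I2 k, div_eq_mul_inv, ENNReal.ofReal_inv_of_pos hk2]
  have hsummable : Summable (fun k : ℕ => ((((k : ℝ) + 1) ^ 2)⁻¹)) := by
    have h : Summable (fun n : ℕ => ((n : ℝ) ^ 2)⁻¹) :=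
      Real.summable_nat_pow_inv.mpr one_lt_two
    have h2 := (summable_nat_add_iff 1).mpr h
    simpa using h2
  have hsum_ne : (∑' k, ℙ (s k)) ≠ ⊤ := by
    have hle : (∑' k, ℙ (s k))
        ≤ ∑' k : ℕ, I * ENNReal.ofReal ((((k : ℝ) + 1) ^ 2)⁻¹) :=
      ENNReal.tsum_le_tsum hμ
    rw [ENNReal.tsum_mul_left,
      ← ENNReal.ofReal_tsum_of_nonneg (fun k => by positivity) hsummable] at hle
    exact (lt_of_le_of_lt hle (ENNReal.mul_lt_top hI ENNReal.ofReal_lt_top)).ne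
  filter_upwards [ae_eventually_notMem hsum_ne] with ω hω
  -- pathwise argument
  set C : ℝ := |Z 0 ω| with hCdef
  have hC0 : 0 ≤ C := abs_nonneg _
  set r : ℝ := Real.exp (-lam) with hrdef
  have hr1 : |r| < 1 := by
    rw [abs_of_pos (Real.exp_pos _)]
    exact Real.exp_lt_one_iff.mpr (by linarith)
  set f : ℕ → ℝ := fun k =>
    (Z k ω - Real.exp (-lam * k) * Z 0 ω) ^ q - (Z k ω) ^ q with hfdef
  -- summability of |f|
  obtain ⟨K, hK⟩ := eventually_atTop.mp hω
  have hbound : ∀ k : ℕ, K ≤ k →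
      |f k| ≤ (q * C * 2 ^ (q - 1)) * (((k : ℝ) + (1 + C)) ^ (q - 1) * r ^ k) := by
    intro k hk
    have hZk : |Z k ω| ≤ (k : ℝ) + 1 := by
      have := hK k hk
      simpa [hsdef, Set.mem_setOf_eq, not_lt] using this
    have hek : Real.exp (-lam * k) = r ^ k := by
      rw [hrdef, ← Real.exp_nat_mul]
      ring_nf
    have he1 : Real.exp (-lam * k) ≤ 1 := by
      apply Real.exp_le_one_iff.mpr
      have : (0 : ℝ) ≤ lam * k := by positivity
      linarith
    have hrk0 : 0 < r ^ k := pow_pos (Real.exp_pos _) k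
    calc |f k| ≤ q * (|Z k ω - Real.exp (-lam * k) * Z 0 ω| + |Z k ω|) ^ (q - 1)
          * |Z k ω - Real.exp (-lam * k) * Z 0 ω - Z k ω| := by
          exact aux_abs_pow_sub_pow_le _ _ q
      _ ≤ q * (2 * (((k : ℝ) + 1) + C)) ^ (q - 1) * (r ^ k * C) := by
          have h1 : |Z k ω - Real.exp (-lam * k) * Z 0 ω| + |Z k ω|
              ≤ 2 * (((k : ℝ) + 1) + C) := by
            have ha : |Z k ω - Real.exp (-lam * k) * Z 0 ω|
                ≤ |Z k ω| + C := by
              refine (abs_sub _ _).trans ?_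
              have hb : |Real.exp (-lam * k) * Z 0 ω| ≤ C := by
                rw [abs_mul, abs_of_pos (Real.exp_pos _), hCdef]
                exact mul_le_of_le_one_left (abs_nonneg _) he1
              linarith
            linarith [hZk, hC0]
          have h2 : |Z k ω - Real.exp (-lam * k) * Z 0 ω - Z k ω| = r ^ k * C := by
            have : Z k ω - Real.exp (-lam * k) * Z 0 ω - Z k ω
                = -(Real.exp (-lam * k) * Z 0 ω) := by ring
            rw [this, abs_neg, abs_mul, abs_of_pos (Real.exp_pos _), hek, hCdef]
          rw [h2]
          gcongr <;> first | positivity | exact h1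
      _ = (q * C * 2 ^ (q - 1)) * (((k : ℝ) + (1 + C)) ^ (q - 1) * r ^ k) := by
          rw [mul_pow]
          ring_nf
  have hg : Summable (fun k : ℕ =>
      (q * C * 2 ^ (q - 1)) * (((k : ℝ) + (1 + C)) ^ (q - 1) * r ^ k)) :=
    (aux_summable_poly_geom (q - 1) (1 + C) hr1).mul_left _
  have habs : Summable (fun k : ℕ => |f k|) := by
    refine (summable_nat_add_iff K).mp ?_
    refine Summable.of_nonneg_of_le (fun k => abs_nonneg _)
      (fun k => hbound (k + K) (Nat.le_add_left K k)) ?_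
    exact (summable_nat_add_iff K).mpr hg
  have hsumf : Summable f := summable_abs_iff.mp habs
  have hts : Tendsto (fun n : ℕ => ∑ k ∈ Finset.range n, f k) atTop
      (nhds (∑' k, f k)) := hsumf.hasSum.tendsto_sum_nat
  have hpow : Tendsto (fun n : ℕ => (n : ℝ) ^ (-ε)) atTop (nhds 0) :=
    (tendsto_rpow_neg_atTop hε).comp tendsto_natCast_atTop_atTop
  simpa using hpow.mul hts
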